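/- Let m, n be coprime positive integers. An affine permutation ω is m-stable if and only if ω^{-1} has the form ω^{-1}(i) = −n·a_i + m·(g_a(i) − 1) for i = 1,...,n, for some vector a ∈ ℤ^n satisfying: (i) a_i − a_j ≤ m for all i, j, and (ii) whenever a_i − a_j = m one has i < j. Here g_a is the minimal-length permutation sorting a in non-decreasing order. -/

import Mathlib

def gvalZ (n : ℕ) (a : Fin n → ℤ) (i : Fin n) : ℕ :=
  (Finset.univ.filter fun j => a j < a i).card +
  (Finset.univ.filter fun j => j ≤ i ∧ a j = a i).card

namespace Stmt4

variable {n : ℕ}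

/-- key encoding of lex order on (a i, i) -/
def K (n : ℕ) (a : Fin n → ℤ) (i : Fin n) : ℤ := n * a i + i

lemma K_lt_of (a : Fin n → ℤ) {i j : Fin n}
    (h : a i < a j ∨ (a i = a j ∧ i < j)) : K n a i < K n a j := by
  have hi : (i : ℤ) < n := by exact_mod_cast i.isLt
  have hj : (0 : ℤ) ≤ j := by positivity
  rcases h with h | ⟨h1, h2⟩
  · have : a i + 1 ≤ a j := by linarith
    have := mul_le_mul_of_nonneg_left this (by positivity : (0:ℤ) ≤ n)
    unfold K; nlinarith
  · have : (i : ℤ) < j := by exact_mod_cast h2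
    unfold K; rw [h1]; linarith

lemma K_lt_iff (a : Fin n → ℤ) {i j : Fin n} :
    K n a i < K n a j ↔ (a i < a j ∨ (a i = a j ∧ i < j)) := by
  constructor
  · intro h
    rcases lt_trichotomy (a i) (a j) with h1 | h1 | h1
    · exact Or.inl h1
    · refine Or.inr ⟨h1, ?_⟩
      by_contra hc
      rcases eq_or_lt_of_le (not_lt.mp hc) with h2 | h2
      · rw [h2] at h; unfold K at h; omega
      · exact absurd (K_lt_of a (Or.inr ⟨h1.symm, h2⟩)) (by linarith)
    · exact absurd (K_lt_of a (Or.inl h1)) (by linarith)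
  · exact K_lt_of a

lemma K_le_iff (a : Fin n → ℤ) {i j : Fin n} :
    K n a j ≤ K n a i ↔ (a j < a i ∨ (j ≤ i ∧ a j = a i)) := by
  rw [← not_lt, K_lt_iff]
  constructor
  · intro h
    rcases lt_trichotomy (a j) (a i) with h1 | h1 | h1
    · exact Or.inl h1
    · refine Or.inr ⟨?_, h1⟩
      by_contra hc
      exact h (Or.inr ⟨h1.symm, lt_of_not_ge hc⟩)
    · exact absurd (Or.inl h1) h
  · rintro (h | ⟨h1, h2⟩) hc
    · rcases hc with hc | ⟨hc, _⟩ <;> linarith [hc]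
    · rcases hc with hc | ⟨_, hc⟩
      · linarith [hc, h2]
      · exact absurd (le_antisymm h1 (le_of_lt hc)) (by intro he; exact absurd hc (by rw [he]; exact lt_irrefl i))

lemma K_injective (a : Fin n → ℤ) {i j : Fin n} (h : K n a i = K n a j) : i = j := by
  rcases lt_trichotomy (a i) (a j) with h1 | h1 | h1
  · exact absurd (K_lt_of a (Or.inl h1)) (by rw [h]; exact lt_irrefl _)
  · unfold K at h; rw [h1] at h
    have : (i : ℤ) = j := by omega
    exact Fin.ext (by exact_mod_cast this)
  · exact absurd (K_lt_of a (Or.inl h1)) (by rw [h]; exact lt_irrefl _)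

lemma gvalZ_eq_card (a : Fin n → ℤ) (i : Fin n) :
    gvalZ n a i = (Finset.univ.filter fun j => K n a j ≤ K n a i).card := by
  unfold gvalZ
  have hset : (Finset.univ.filter fun j => K n a j ≤ K n a i)
      = (Finset.univ.filter fun j => a j < a i) ∪ (Finset.univ.filter fun j => j ≤ i ∧ a j = a i) := by
    rw [← Finset.filter_or]
    apply Finset.filter_congr
    intro j _
    rw [K_le_iff a]
  rw [hset, Finset.card_union_of_disjoint]
  rw [Finset.disjoint_filter]
  intro j _ h1 h2
  exact absurd h2.2 (ne_of_lt h1)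


lemma gval_lt_of_K_lt (a : Fin n → ℤ) {i j : Fin n}
    (h : K n a i < K n a j) : gvalZ n a i < gvalZ n a j := by
  rw [gvalZ_eq_card, gvalZ_eq_card]
  apply Finset.card_lt_card
  have hsub : (Finset.univ.filter fun k => K n a k ≤ K n a i)
      ⊆ (Finset.univ.filter fun k => K n a k ≤ K n a j) := by
    intro x hx
    simp only [Finset.mem_filter, Finset.mem_univ, true_and] at *
    linarith
  rw [Finset.ssubset_iff_of_subset hsub]
  refine ⟨j, ?_, ?_⟩ <;> simp only [Finset.mem_filter, Finset.mem_univ, true_and]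
  · exact le_refl _
  · linarith

lemma K_lt_iff_gval (a : Fin n → ℤ) {i j : Fin n} :
    K n a i < K n a j ↔ gvalZ n a i < gvalZ n a j := by
  constructor
  · exact gval_lt_of_K_lt a
  · intro h
    rcases lt_trichotomy (K n a i) (K n a j) with h1 | h1 | h1
    · exact h1
    · rw [K_injective a h1] at h; omega
    · exact absurd (gval_lt_of_K_lt a h1) (by omega)

lemma gval_pos (a : Fin n → ℤ) (i : Fin n) : 1 ≤ gvalZ n a i := by
  rw [gvalZ_eq_card]
  rw [Nat.succ_le_iff, Finset.card_pos]
  exact ⟨i, by simp⟩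

lemma gval_le (a : Fin n → ℤ) (i : Fin n) : gvalZ n a i ≤ n := by
  rw [gvalZ_eq_card]
  calc _ ≤ Finset.univ.card := Finset.card_filter_le _ _
  _ = n := by simp

lemma gval_inj (a : Fin n → ℤ) {i j : Fin n} (h : gvalZ n a i = gvalZ n a j) : i = j := by
  rcases lt_trichotomy (K n a i) (K n a j) with h1 | h1 | h1
  · have := gval_lt_of_K_lt a h1; omega
  · exact K_injective a h1
  · have := gval_lt_of_K_lt a h1; omega

lemma gval_surj (a : Fin n → ℤ) (v : ℕ) (h1 : 1 ≤ v) (h2 : v ≤ n) :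
    ∃ i, gvalZ n a i = v := by
  have hn : 0 < n := lt_of_lt_of_le h1 h2
  set G : Fin n → Fin n := fun i => ⟨gvalZ n a i - 1, by have := gval_le a i; have := gval_pos a i; omega⟩ with hG
  have hGinj : Function.Injective G := by
    intro i j hij
    apply gval_inj a
    have := Fin.mk.injEq (gvalZ n a i - 1) _ (gvalZ n a j - 1) _ ▸ hij
    have h3 := gval_pos a i; have h4 := gval_pos a j
    have : gvalZ n a i - 1 = gvalZ n a j - 1 := Fin.mk.inj_iff.mp hij
    omega
  have hGsurj : Function.Surjective G := Finite.surjective_of_injective hGinj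
  obtain ⟨i, hi⟩ := hGsurj ⟨v - 1, by omega⟩
  have : gvalZ n a i - 1 = v - 1 := Fin.mk.inj_iff.mp hi
  have := gval_pos a i
  exact ⟨i, by omega⟩


lemma b_eq_gval (hn : 0 < n) (a b : Fin n → ℤ)
    (hb0 : ∀ i, 0 ≤ b i) (hb1 : ∀ i, b i < n)
    (hbinj : Function.Injective b)
    (hA : ∀ i j, b i = b j + 1 → K n a j < K n a i) :
    ∀ i, (gvalZ n a i : ℤ) = b i + 1 := by
  -- b is surjective onto [0, n)
  have hsurj : ∀ v : ℤ, 0 ≤ v → v < n → ∃ j, b j = v := by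
    intro v hv0 hv1
    set B : Fin n → Fin n := fun i => ⟨(b i).toNat, by have := hb0 i; have := hb1 i; omega⟩ with hB
    have hBinj : Function.Injective B := by
      intro i j hij
      have : (b i).toNat = (b j).toNat := Fin.mk.inj_iff.mp hij
      exact hbinj (by have := hb0 i; have := hb0 j; omega)
    obtain ⟨j, hj⟩ := Finite.surjective_of_injective hBinj ⟨v.toNat, by omega⟩
    have : (b j).toNat = v.toNat := Fin.mk.inj_iff.mp hj
    exact ⟨j, by have := hb0 j; omega⟩
  have hmono : ∀ d : ℕ, ∀ i j : Fin n, b j - b i = d + 1 → K n a i < K n a j := by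
    intro d
    induction d with
    | zero => exact fun i j h => hA j i (by push_cast at h; linarith)
    | succ d ih =>
      intro i j h
      obtain ⟨k, hk⟩ := hsurj (b i + d + 1) (by have := hb0 i; positivity)
        (by have := hb1 j; push_cast at h; linarith)
      have h1 : K n a i < K n a k := ih i k (by rw [hk]; push_cast; ring)
      have h2 : K n a k < K n a j := hA j k (by push_cast at h; linarith)
      exact lt_trans h1 h2
  have hlt : ∀ i j : Fin n, b i < b j → K n a i < K n a j := by
    intro i j h
    exact hmono (b j - b i - 1).toNat i j (by omega)
  have hiff : ∀ i j : Fin n, (b j ≤ b i ↔ K n a j ≤ K n a i) := by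
    intro i j
    constructor
    · intro h
      rcases eq_or_lt_of_le h with h1 | h1
      · rw [hbinj h1]
      · exact le_of_lt (hlt j i h1)
    · intro h
      by_contra hc
      push_neg at hc
      exact absurd (hlt i j hc) (by linarith)
  intro i
  rw [gvalZ_eq_card]
  have hset : (Finset.univ.filter fun j => K n a j ≤ K n a i)
      = (Finset.univ.filter fun j => b j ≤ b i) := by
    apply Finset.filter_congr
    intro j _
    exact (hiff i j).symm
  rw [hset]
  have hcard : (Finset.univ.filter fun j => b j ≤ b i).card = (Finset.Icc (0:ℤ) (b i)).card := by
    apply Finset.card_bij (fun j _ => b j)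
    · intro j hj
      simp only [Finset.mem_filter, Finset.mem_univ, true_and] at hj
      rw [Finset.mem_Icc]
      exact ⟨hb0 j, hj⟩
    · intro x hx y hy hxy
      exact hbinj hxy
    · intro v hv
      rw [Finset.mem_Icc] at hv
      obtain ⟨j, hj⟩ := hsurj v hv.1 (lt_of_le_of_lt hv.2 (hb1 i))
      refine ⟨j, ?_, hj⟩
      simp only [Finset.mem_filter, Finset.mem_univ, true_and]
      rw [hj]; exact hv.2
  rw [hcard, Int.card_Icc]
  have := hb0 i
  omega

lemma exists_inv (m n : ℕ) (hco : Nat.Coprime m n) : ∃ c : ℤ, (n:ℤ) ∣ (m * c - 1) := by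
  have h : IsCoprime (m:ℤ) (n:ℤ) := Int.isCoprime_iff_gcd_eq_one.mpr (by simpa using hco)
  obtain ⟨u, v, huv⟩ := h
  exact ⟨u, ⟨-v, by linarith⟩⟩


lemma fin_eq_of_mul (t : ℤ) (i j : Fin n) (h : t * n = (i:ℤ) - j) : i = j := by
  have hi : (i:ℤ) < n := by exact_mod_cast i.isLt
  have hj : (j:ℤ) < n := by exact_mod_cast j.isLt
  have hi0 : (0:ℤ) ≤ i := by positivity
  have hj0 : (0:ℤ) ≤ j := by positivity
  have ht : t = 0 := by
    rcases lt_trichotomy t 0 with h1 | h1 | h1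
    · nlinarith
    · exact h1
    · nlinarith
  rw [ht] at h
  have : (i:ℤ) = j := by linarith
  exact Fin.ext (by exact_mod_cast this)

end Stmt4

open Stmt4

theorem stmt_4 (m n : ℕ) (hm : 0 < m) (hn : 0 < n) (hco : Nat.Coprime m n)
    (ω : ℤ → ℤ) (hbij : Function.Bijective ω)
    (hper : ∀ i : ℤ, ω (i + n) = ω i + n) :
    (∀ x : ℤ, ω x < ω (x + m)) ↔
      ∃ a : Fin n → ℤ,
        (∀ i j : Fin n, a i - a j ≤ m) ∧
        (∀ i j : Fin n, a i - a j = m → i < j) ∧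
        (∀ i : Fin n, ω (-(n : ℤ) * a i + m * ((gvalZ n a i : ℤ) - 1)) = (i : ℤ) + 1) := by
  obtain ⟨σ, hσω, hωσ⟩ := Function.bijective_iff_has_inverse.mp hbij
  have hnz : (n:ℤ) ≠ 0 := by exact_mod_cast hn.ne'
  have hnpos : (0:ℤ) < n := by exact_mod_cast hn
  have hωk : ∀ (k : ℤ) (x : ℤ), ω (x + k * n) = ω x + k * n := by
    intro k
    induction k using Int.induction_on with
    | zero => simp
    | succ k ih =>
      intro x
      have h1 : x + ((k:ℤ)+1) * n = (x + k*n) + n := by ring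
      rw [h1, hper, ih]; ring
    | pred k ih =>
      intro x
      have h2 := hper (x + (-(k:ℤ)-1) * n)
      have h3 : x + (-(k:ℤ)-1) * n + n = x + (-(k:ℤ)) * n := by ring
      rw [h3, ih] at h2
      have h4 : ω (x + (-(k:ℤ)-1) * n) = ω x + (-(k:ℤ)-1) * n := by
        have : -(k:ℤ) * n = (-(k:ℤ)-1) * n + n := by ring
        rw [this] at h2; linarith
      convert h4 using 3 <;> ring
  have hσn : ∀ (y k : ℤ), σ (y + k * n) = σ y + k * n := by
    intro y k
    have h1 := hωk k (σ y)
    rw [hωσ] at h1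
    calc σ (y + k * n) = σ (ω (σ y + k * n)) := by rw [h1]
      _ = σ y + k * n := hσω _
  constructor
  · -- forward direction
    intro hst
    have hst' : ∀ u v : ℤ, σ u = σ v + (m:ℤ) → v < u := by
      intro u v h
      have h1 := hst (σ v)
      rw [hωσ] at h1
      rw [← h, hωσ] at h1
      exact h1
    obtain ⟨c, hc⟩ := exists_inv m n hco
    set b : Fin n → ℤ := fun i => (c * σ ((i:ℤ)+1)) % n with hbdef
    have hdvd : ∀ i : Fin n, (n:ℤ) ∣ ((m:ℤ) * b i - σ ((i:ℤ)+1)) := by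
      intro i
      have h1 : (m:ℤ) * b i - σ ((i:ℤ)+1)
          = ((m:ℤ)*c - 1) * σ ((i:ℤ)+1) - (m:ℤ) * ((n:ℤ) * ((c * σ ((i:ℤ)+1))/n)) := by
        have h2 := Int.emod_def (c * σ ((i:ℤ)+1)) n
        rw [hbdef]; dsimp only; rw [h2]; ring
      rw [h1]
      exact dvd_sub (Dvd.dvd.mul_right hc _) (Dvd.dvd.mul_left (dvd_mul_right _ _) _)
    set a : Fin n → ℤ := fun i => ((m:ℤ) * b i - σ ((i:ℤ)+1)) / n with hadef
    have hs : ∀ i : Fin n, σ ((i:ℤ)+1) = -(n:ℤ) * a i + m * b i := by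
      intro i
      have h1 := Int.ediv_mul_cancel (hdvd i)
      rw [hadef]; dsimp only
      linarith
    have hb0 : ∀ i, 0 ≤ b i := fun i => Int.emod_nonneg _ hnz
    have hb1 : ∀ i, b i < n := fun i => Int.emod_lt_of_pos _ hnpos
    have hbinj : Function.Injective b := by
      intro i j hij
      have h1 : σ ((j:ℤ)+1 + (a j - a i) * n) = σ ((i:ℤ)+1) := by
        rw [hσn]
        rw [hs i, hs j, hij]; ring
      have h2 : (j:ℤ)+1 + (a j - a i) * n = (i:ℤ)+1 := by
        have := congrArg ω h1
        rw [hωσ, hωσ] at this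
        exact this
      exact fin_eq_of_mul (a j - a i) i j (by linarith)
    have hA : ∀ i j : Fin n, b i = b j + 1 → K n a j < K n a i := by
      intro i j hb
      have heq : σ ((i:ℤ)+1 + (a i - a j) * n) = σ ((j:ℤ)+1) + m := by
        rw [hσn, hs i, hs j, hb]; ring
      have h1 := hst' _ _ heq
      unfold K; nlinarith [h1]
    have hB : ∀ i j : Fin n, b i = 0 → b j = (n:ℤ) - 1 → K n a j < K n a i + n * m := by
      intro i j hbi hbj
      have heq : σ ((i:ℤ)+1 + (a i - a j + m) * n) = σ ((j:ℤ)+1) + m := by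
        rw [hσn, hs i, hs j, hbi, hbj]; ring
      have h1 := hst' _ _ heq
      unfold K; nlinarith [h1]
    have hbg := b_eq_gval hn a b hb0 hb1 hbinj hA
    obtain ⟨i0, hi0⟩ := gval_surj a 1 le_rfl hn
    obtain ⟨j0, hj0⟩ := gval_surj a n hn le_rfl
    have hbi0 : b i0 = 0 := by have := hbg i0; rw [hi0] at this; push_cast at this; linarith
    have hbj0 : b j0 = (n:ℤ) - 1 := by have := hbg j0; rw [hj0] at this; linarith
    have hKB := hB i0 j0 hbi0 hbj0
    have hmax : ∀ i, K n a i ≤ K n a j0 := by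
      intro i
      apply le_of_not_gt
      intro h
      rw [K_lt_iff_gval] at h
      have := gval_le a i
      omega
    have hmin : ∀ i, K n a i0 ≤ K n a i := by
      intro i
      apply le_of_not_gt
      intro h
      rw [K_lt_iff_gval] at h
      have := gval_pos a i
      omega
    have hkey : ∀ i j : Fin n, K n a i - K n a j ≤ (n:ℤ) * m - 1 := by
      intro i j
      have := hmax i
      have := hmin j
      linarith
    refine ⟨a, ?_, ?_, ?_⟩
    · intro i j
      by_contra hcon
      push_neg at hcon
      have h1 : (m:ℤ) + 1 ≤ a i - a j := by linarith
      have h2 := mul_le_mul_of_nonneg_left h1 (le_of_lt hnpos)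
      have h3 := hkey i j
      have hi : (0:ℤ) ≤ i := by positivity
      have hj : (j:ℤ) < n := by exact_mod_cast j.isLt
      unfold K at h3
      nlinarith
    · intro i j hij
      have h3 := hkey i j
      unfold K at h3
      have h4 : (n:ℤ) * (a i - a j) = n * m := by rw [hij]
      have h5 : (i:ℤ) < j := by nlinarith
      have : (i:ℕ) < (j:ℕ) := by exact_mod_cast h5
      exact this
    · intro i
      have h1 : -(n:ℤ) * a i + (m:ℤ) * ((gvalZ n a i : ℤ) - 1) = σ ((i:ℤ)+1) := by
        rw [hbg i, hs i]; ring
      rw [h1, hωσ]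
  · -- backward direction
    rintro ⟨a, h1, h2, h3⟩
    set b : Fin n → ℤ := fun i => (gvalZ n a i : ℤ) - 1 with hbdef
    have hs : ∀ i : Fin n, σ ((i:ℤ)+1) = -(n:ℤ) * a i + m * b i := by
      intro i
      rw [← h3 i, hσω]
    have hb0 : ∀ i, 0 ≤ b i := by
      intro i; have := gval_pos a i; rw [hbdef]; dsimp only; push_cast; omega
    have hb1 : ∀ i, b i < n := by
      intro i; have := gval_le a i; rw [hbdef]; dsimp only; push_cast; omega
    have hA : ∀ i j : Fin n, b i = b j + 1 → K n a j < K n a i := by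
      intro i j hb
      rw [K_lt_iff_gval]
      rw [hbdef] at hb; dsimp only at hb
      have gi := gval_pos a i; have gj := gval_pos a j
      omega
    have hB : ∀ i j : Fin n, b i = 0 → b j = (n:ℤ) - 1 → K n a j < K n a i + n * m := by
      intro i j _ _
      have hji : a j - a i ≤ m := h1 j i
      have hi : (0:ℤ) ≤ i := by positivity
      have hj : (j:ℤ) < n := by exact_mod_cast j.isLt
      rcases eq_or_lt_of_le hji with he | hlt
      · have hlt2 := h2 j i he
        have hji2 : (j:ℤ) < i := by exact_mod_cast hlt2
        have hnm : (n:ℤ) * (a j - a i) = n * m := by rw [he]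
        unfold K; nlinarith
      · have h4 : a j - a i ≤ (m:ℤ) - 1 := by linarith
        have h5 := mul_le_mul_of_nonneg_left h4 (le_of_lt hnpos)
        unfold K; nlinarith
    have key : ∀ u v : ℤ, σ u = σ v + (m:ℤ) → v < u := by
      intro u v hE
      have hdec : ∀ w : ℤ, ∃ (i : Fin n) (k : ℤ), w = (i:ℤ) + 1 + k * n := by
        intro w
        have hm0 : 0 ≤ (w-1) % n := Int.emod_nonneg _ hnz
        have hm1 : (w-1) % n < n := Int.emod_lt_of_pos _ hnpos
        refine ⟨⟨((w-1) % n).toNat, by omega⟩, (w-1)/n, ?_⟩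
        have hde := Int.mul_ediv_add_emod (w-1) (n:ℤ)
        push_cast
        rw [Int.toNat_of_nonneg hm0]
        linarith
      obtain ⟨iu, ku, hu⟩ := hdec u
      obtain ⟨iv, kv, hv⟩ := hdec v
      subst hu; subst hv
      rw [hσn, hσn, hs iu, hs iv] at hE
      have hmd : (m:ℤ) * (b iu - b iv - 1) = n * (a iu - a iv - ku + kv) := by linarith
      have hdvd2 : (n:ℤ) ∣ (b iu - b iv - 1) := by
        have hcop : IsCoprime (n:ℤ) (m:ℤ) :=
          Int.isCoprime_iff_gcd_eq_one.mpr (by simpa [Nat.gcd_comm] using hco)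
        exact hcop.dvd_of_dvd_mul_left ⟨_, hmd⟩
      obtain ⟨t, ht⟩ := hdvd2
      have hbu0 := hb0 iu; have hbu1 := hb1 iu
      have hbv0 := hb0 iv; have hbv1 := hb1 iv
      have ht01 : t = 0 ∨ t = -1 := by
        have hta : (-1:ℤ) ≤ t := by
          by_contra hcon
          push_neg at hcon
          have h6 : t ≤ -2 := by omega
          have h7 := mul_le_mul_of_nonneg_left h6 (le_of_lt hnpos)
          linarith
        have htb : t ≤ 0 := by
          by_contra hcon
          push_neg at hcon
          have h6 : (1:ℤ) ≤ t := hcon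
          have h7 := mul_le_mul_of_nonneg_left h6 (le_of_lt hnpos)
          linarith
        omega
      have hiu : (iu:ℤ) < n := by exact_mod_cast iu.isLt
      have hiv : (iv:ℤ) < n := by exact_mod_cast iv.isLt
      have hiu0 : (0:ℤ) ≤ iu := by positivity
      have hiv0 : (0:ℤ) ≤ iv := by positivity
      rcases ht01 with ht0 | ht0
      · rw [ht0] at ht
        have hb : b iu = b iv + 1 := by linarith
        have hKA := hA iu iv hb
        have hz : (n:ℤ) * (a iu - a iv - ku + kv) = 0 := by
          rw [← hmd, hb]; ring
        unfold K at hKA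
        linarith [hz]
      · rw [ht0] at ht
        have hbu : b iu = 0 := by linarith
        have hbv : b iv = (n:ℤ) - 1 := by linarith
        have hKB := hB iu iv hbu hbv
        have hz : (n:ℤ) * (-(m:ℤ)) = n * (a iu - a iv - ku + kv) := by
          rw [← hmd, hbu, hbv]; ring
        unfold K at hKB
        linarith [hz]
    intro x
    exact key (ω (x + m)) (ω x) (by rw [hσω, hσω])
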